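/- Let E be a σ-Dedekind complete Banach lattice and (f_n) a disjoint weak*-null sequence in E*. Then the sequences (|f_n|), (f_n^+), and (f_n^-) all converge to 0 in the weak* topology. -/

import Mathlib

open Filter Topology

section Defs

variable {E : Type*} [NormedAddCommGroup E] [Lattice E] [IsOrderedAddMonoid E] [HasSolidNorm E] [NormedSpace ℝ E]

/-- The value of the modulus `|f|` of a functional at a positive element `x`:
`|f|(x) = sup { f y : |y| ≤ x }`. -/
noncomputable def absVal (f : E →L[ℝ] ℝ) (x : E) : ℝ :=
  sSup ((fun y => f y) '' {y | |y| ≤ x})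

/-- The value of the positive part `f⁺` of a functional at a positive element `x`:
`f⁺(x) = sup { f y : 0 ≤ y ≤ x }`. -/
noncomputable def posVal (f : E →L[ℝ] ℝ) (x : E) : ℝ :=
  sSup ((fun y => f y) '' {y | 0 ≤ y ∧ y ≤ x})

/-- The value of `|f|` at an arbitrary `x`, via `x = x⁺ - x⁻`. -/
noncomputable def absValF (f : E →L[ℝ] ℝ) (x : E) : ℝ :=
  absVal f (x ⊔ 0) - absVal f (-x ⊔ 0)

/-- The value of `f⁺` at an arbitrary `x`, via `x = x⁺ - x⁻`. -/
noncomputable def posValF (f : E →L[ℝ] ℝ) (x : E) : ℝ :=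
  posVal f (x ⊔ 0) - posVal f (-x ⊔ 0)

/-- The value of `f⁻ = (-f)⁺` at an arbitrary `x`. -/
noncomputable def negValF (f : E →L[ℝ] ℝ) (x : E) : ℝ :=
  posValF (-f) x

/-- `f ≤ g` in the dual order: `f x ≤ g x` for all `x ≥ 0`. -/
def FunLe (f g : E →L[ℝ] ℝ) : Prop := ∀ x : E, 0 ≤ x → f x ≤ g x

/-- `|f| ≤ |g|` in the dual order. -/
def FunAbsLe (f g : E →L[ℝ] ℝ) : Prop := ∀ x : E, 0 ≤ x → absVal f x ≤ absVal g x

/-- Disjointness of two functionals: `(|f| ∧ |g|)(x) = 0` for all `x ≥ 0`, where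
`(|f| ∧ |g|)(x) = inf { |f|(y) + |g|(x - y) : 0 ≤ y ≤ x }` (Riesz–Kantorovich). -/
def FunDisjoint (f g : E →L[ℝ] ℝ) : Prop :=
  ∀ x : E, 0 ≤ x →
    sInf ((fun y => absVal f y + absVal g (x - y)) '' {y | 0 ≤ y ∧ y ≤ x}) = 0

/-- A sequence of functionals is weak*-null. -/
def WeakStarNull (f : ℕ → E →L[ℝ] ℝ) : Prop :=
  ∀ x : E, Tendsto (fun n => f n x) atTop (𝓝 0)

/-- A sequence in `E` is weakly null. -/
def WeaklyNull (x : ℕ → E) : Prop :=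
  ∀ f : E →L[ℝ] ℝ, Tendsto (fun n => f (x n)) atTop (𝓝 0)

/-- A sequence of functionals is weakly null (i.e. null for `σ(E*, E**)`). -/
def WeaklyNullDual (f : ℕ → E →L[ℝ] ℝ) : Prop :=
  ∀ Φ : (E →L[ℝ] ℝ) →L[ℝ] ℝ, Tendsto (fun n => Φ (f n)) atTop (𝓝 0)

/-- Disjointness of two elements of a Banach lattice. -/
def ElemDisjoint (x y : E) : Prop := |x| ⊓ |y| = 0

/-- A set is almost limited: it is norm bounded and every disjoint weak*-null sequence of
functionals converges uniformly to zero on it. -/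
def AlmostLimited (A : Set E) : Prop :=
  Bornology.IsBounded A ∧
    ∀ f : ℕ → E →L[ℝ] ℝ, Pairwise (fun m n => FunDisjoint (f m) (f n)) → WeakStarNull f →
      ∀ ε > 0, ∀ᶠ n in atTop, ∀ x ∈ A, |f n x| < ε

/-- A set is limited: it is norm bounded and every weak*-null sequence of functionals
converges uniformly to zero on it. -/
def LimitedSet (A : Set E) : Prop :=
  Bornology.IsBounded A ∧
    ∀ f : ℕ → E →L[ℝ] ℝ, WeakStarNull f →
      ∀ ε > 0, ∀ᶠ n in atTop, ∀ x ∈ A, |f n x| < ε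

/-- A set is almost Dunford–Pettis: it is norm bounded and every disjoint weakly null
sequence of functionals converges uniformly to zero on it. -/
def AlmostDPSet (A : Set E) : Prop :=
  Bornology.IsBounded A ∧
    ∀ f : ℕ → E →L[ℝ] ℝ, Pairwise (fun m n => FunDisjoint (f m) (f n)) → WeaklyNullDual f →
      ∀ ε > 0, ∀ᶠ n in atTop, ∀ x ∈ A, |f n x| < ε

/-- The solid hull of a set. -/
def SolidHull (A : Set E) : Set E := {y | ∃ x ∈ A, |y| ≤ |x|}

/-- A set is L-weakly compact: norm bounded, and every disjoint sequence in its solid hull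
is norm null. -/
def LWeaklyCompact (A : Set E) : Prop :=
  Bornology.IsBounded A ∧
    ∀ x : ℕ → E, (∀ n, x n ∈ SolidHull A) → Pairwise (fun m n => ElemDisjoint (x m) (x n)) →
      Tendsto (fun n => ‖x n‖) atTop (𝓝 0)

/-- A set `B ⊆ E*` is an almost L-set: norm bounded, and every disjoint weakly null sequence
of `E` converges uniformly to zero on `B`. -/
def AlmostLSet (B : Set (E →L[ℝ] ℝ)) : Prop :=
  Bornology.IsBounded B ∧
    ∀ x : ℕ → E, Pairwise (fun m n => ElemDisjoint (x m) (x n)) → WeaklyNull x →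
      ∀ ε > 0, ∀ᶠ n in atTop, ∀ f ∈ B, |f (x n)| < ε

/-- The solid hull of a set of functionals, using the dual order. -/
def DualSolidHull (B : Set (E →L[ℝ] ℝ)) : Set (E →L[ℝ] ℝ) :=
  {g | ∃ f ∈ B, FunAbsLe g f}

/-- A set `B ⊆ E*` is L-weakly compact: norm bounded, and every disjoint sequence in its
solid hull is norm null. -/
def DualLWeaklyCompact (B : Set (E →L[ℝ] ℝ)) : Prop :=
  Bornology.IsBounded B ∧
    ∀ g : ℕ → E →L[ℝ] ℝ, (∀ n, g n ∈ DualSolidHull B) →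
      Pairwise (fun m n => FunDisjoint (g m) (g n)) →
        Tendsto (fun n => ‖g n‖) atTop (𝓝 0)

end Defs

/-- A Banach lattice is σ-Dedekind complete: every (countable) sequence bounded above has a
supremum. -/
def SigmaDedekindComplete (E : Type*) [NormedAddCommGroup E] [Lattice E] [IsOrderedAddMonoid E] [HasSolidNorm E] : Prop :=
  ∀ s : ℕ → E, (∃ b, ∀ n, s n ≤ b) → ∃ a, IsLUB (Set.range s) a

/-- The norm of `E` is order continuous: if a downward directed set has infimum `0`, then it
contains elements of arbitrarily small norm. -/
def OrderContinuousNorm (E : Type*) [NormedAddCommGroup E] [Lattice E] [IsOrderedAddMonoid E] [HasSolidNorm E] : Prop :=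
  ∀ A : Set E, A.Nonempty → DirectedOn (· ≥ ·) A → IsGLB A 0 →
    ∀ ε > 0, ∃ a ∈ A, ‖a‖ < ε

/-- The norm of `E*` is order continuous (with the dual order spelled out): if a nonempty
family of functionals is downward directed, consists of positive functionals, and `0` is its
greatest lower bound, then it contains functionals of arbitrarily small norm. -/
def DualOrderContinuousNorm (E : Type*) [NormedAddCommGroup E] [Lattice E] [IsOrderedAddMonoid E] [HasSolidNorm E] [NormedSpace ℝ E] :
    Prop :=
  ∀ A : Set (E →L[ℝ] ℝ), A.Nonempty →
    (∀ f ∈ A, ∀ g ∈ A, ∃ h ∈ A, FunLe h f ∧ FunLe h g) →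
    (∀ f ∈ A, FunLe 0 f) →
    (∀ g, (∀ f ∈ A, FunLe g f) → FunLe g 0) →
    ∀ ε > 0, ∃ f ∈ A, ‖f‖ < ε

/-- `E` has the weak Dunford–Pettis* property: `f n (x n) → 0` for every weakly null
sequence `(x n)` in `E` and every disjoint weak*-null sequence `(f n)` in `E*`. -/
def WDPStar (E : Type*) [NormedAddCommGroup E] [Lattice E] [IsOrderedAddMonoid E] [HasSolidNorm E] [NormedSpace ℝ E] : Prop :=
  ∀ (x : ℕ → E) (f : ℕ → E →L[ℝ] ℝ), WeaklyNull x →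
    Pairwise (fun m n => FunDisjoint (f m) (f n)) → WeakStarNull f →
      Tendsto (fun n => f n (x n)) atTop (𝓝 0)

/-- `E` has the positive Schur property: every weakly null sequence of positive elements is
norm null. -/
def PositiveSchur (E : Type*) [NormedAddCommGroup E] [Lattice E] [IsOrderedAddMonoid E] [HasSolidNorm E] [NormedSpace ℝ E] : Prop :=
  ∀ x : ℕ → E, (∀ n, 0 ≤ x n) → WeaklyNull x → Tendsto (fun n => ‖x n‖) atTop (𝓝 0)

/-- A set is relatively weakly compact if the weak closure of its image in the weak space is
compact. -/
def RelWeaklyCompact {E : Type*} [NormedAddCommGroup E] [Lattice E] [IsOrderedAddMonoid E] [HasSolidNorm E] [NormedSpace ℝ E]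
    (W : Set E) : Prop :=
  IsCompact (closure ((toWeakSpace ℝ E) '' W))



set_option linter.unusedSectionVars false
set_option maxHeartbeats 1000000

namespace Stmt1Aux

section Toolkit
variable {E : Type*} [NormedAddCommGroup E] [Lattice E] [IsOrderedAddMonoid E] [HasSolidNorm E] [NormedSpace ℝ E]

lemma inf_add_le' {u a b : E} (hu : 0 ≤ u) (ha : 0 ≤ a) (hb : 0 ≤ b) :
    u ⊓ (a + b) ≤ u ⊓ a + u ⊓ b := by
  have h1 : u ⊓ (a + b) ≤ u ⊓ a + b := by
    have : u ⊓ (a + b) ≤ (u + b) ⊓ (a + b) :=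
      inf_le_inf_right _ (le_add_of_nonneg_right hb)
    simpa [inf_add] using this
  have h2 : u ⊓ (a + b) - u ⊓ a ≤ b := sub_le_iff_le_add.2 (by simpa [add_comm] using h1)
  have h3 : u ⊓ (a + b) - u ⊓ a ≤ u := by
    have h0 : (0:E) ≤ u ⊓ a := le_inf hu ha
    calc u ⊓ (a + b) - u ⊓ a ≤ u ⊓ (a + b) := sub_le_self _ h0
    _ ≤ u := inf_le_left
  have h4 := le_inf h3 h2
  have := sub_le_iff_le_add.1 h4
  simpa [add_comm] using this

lemma add_eq_sup_of_inf_eq_zero {a b : E} (h : a ⊓ b = 0) : a + b = a ⊔ b := by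
  have := inf_add_sup a b
  rw [h, zero_add] at this
  exact this.symm

lemma sup_le_add_of_nonneg {a b : E} (ha : 0 ≤ a) (hb : 0 ≤ b) : a ⊔ b ≤ a + b :=
  sup_le (le_add_of_nonneg_right hb) (le_add_of_nonneg_left ha)

lemma inf_nsmul_le {a b : E} (ha : 0 ≤ a) (hb : 0 ≤ b) (k : ℕ) :
    a ⊓ (k • b) ≤ k • (a ⊓ b) := by
  induction k with
  | zero => simp
  | succ k ih =>
    have hk : (0:E) ≤ k • b := nsmul_nonneg hb k
    calc a ⊓ ((k+1) • b) = a ⊓ (k • b + b) := by rw [succ_nsmul]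
      _ ≤ a ⊓ (k • b) + a ⊓ b := inf_add_le' ha hk hb
      _ ≤ k • (a ⊓ b) + a ⊓ b := add_le_add_left ih _
      _ = (k+1) • (a ⊓ b) := (succ_nsmul _ _).symm

/-- If each term of a sequence is disjoint from `h ≥ 0`, so is its lub. -/
lemma isLUB_inf_eq_zero {a : ℕ → E} {p h : E} (hlub : IsLUB (Set.range a) p)
    (hh : 0 ≤ h) (h0 : ∀ k, 0 ≤ a k) (hd : ∀ k, a k ⊓ h = 0) : p ⊓ h = 0 := by
  have hp0 : 0 ≤ p := le_trans (h0 0) (hlub.1 ⟨0, rfl⟩)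
  have hd0 : 0 ≤ p ⊓ h := le_inf hp0 hh
  have key : ∀ k, a k + p ⊓ h ≤ p := by
    intro k
    have h1 : a k ⊓ (p ⊓ h) = 0 := by
      refine le_antisymm ?_ (le_inf (h0 k) hd0)
      calc a k ⊓ (p ⊓ h) ≤ a k ⊓ h := inf_le_inf_left _ inf_le_right
        _ = 0 := hd k
    rw [add_eq_sup_of_inf_eq_zero h1]
    exact sup_le (hlub.1 ⟨k, rfl⟩) inf_le_left
  have h5 : p ≤ p - p ⊓ h := by
    refine hlub.2 ?_
    rintro _ ⟨k, rfl⟩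
    exact le_sub_iff_add_le.2 (key k)
  have h6 : p ⊓ h ≤ 0 := by
    have := sub_nonneg.2 h5
    simpa using this
  exact le_antisymm h6 hd0

lemma sub_inf_self_sup_zero (a b : E) : a - ((a - b) ⊔ 0) = a ⊓ b := by
  rw [sub_sup, sub_sub_cancel, sub_zero, inf_comm]

end Toolkit

section AbsVal
variable {E : Type*} [NormedAddCommGroup E] [Lattice E] [IsOrderedAddMonoid E] [HasSolidNorm E] [NormedSpace ℝ E] (f : E →L[ℝ] ℝ)

lemma absVal_set_nonempty {v : E} (hv : 0 ≤ v) :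
    ((fun y => f y) '' {y | |y| ≤ v}).Nonempty :=
  ⟨f 0, ⟨0, by simpa using hv, rfl⟩⟩

lemma absVal_set_bddAbove (v : E) : BddAbove ((fun y => f y) '' {y | |y| ≤ v}) := by
  refine ⟨‖f‖ * ‖v‖, ?_⟩
  rintro _ ⟨y, hy, rfl⟩
  have h1 : ‖y‖ ≤ ‖v‖ := HasSolidNorm.solid (le_trans hy (le_abs_self v))
  calc f y ≤ ‖f y‖ := le_abs_self _
    _ ≤ ‖f‖ * ‖y‖ := f.le_opNorm y
    _ ≤ ‖f‖ * ‖v‖ := mul_le_mul_of_nonneg_left h1 (norm_nonneg f)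

lemma le_absVal {v y : E} (h : |y| ≤ v) : f y ≤ absVal f v :=
  le_csSup (absVal_set_bddAbove f v) ⟨y, h, rfl⟩

lemma absVal_nonneg {v : E} (hv : 0 ≤ v) : 0 ≤ absVal f v := by
  have := le_absVal f (y := 0) (v := v) (by simpa using hv)
  simpa using this

lemma abs_apply_le_absVal {v y : E} (h : |y| ≤ v) : |f y| ≤ absVal f v := by
  have h1 : f y ≤ absVal f v := le_absVal f h
  have h2 : f (-y) ≤ absVal f v := le_absVal f (by simpa using h)
  have h2' : -(f y) ≤ absVal f v := by simpa using h2
  exact abs_le.2 ⟨by linarith, h1⟩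

lemma absVal_le {v : E} (hv : 0 ≤ v) {c : ℝ} (h : ∀ y, |y| ≤ v → f y ≤ c) :
    absVal f v ≤ c :=
  csSup_le (absVal_set_nonempty f hv) (by rintro _ ⟨y, hy, rfl⟩; exact h y hy)

lemma absVal_le_norm {v : E} (hv : 0 ≤ v) : absVal f v ≤ ‖f‖ * ‖v‖ := by
  refine absVal_le f hv ?_
  intro y hy
  have h1 : ‖y‖ ≤ ‖v‖ := HasSolidNorm.solid (le_trans hy (le_abs_self v))
  calc f y ≤ ‖f y‖ := le_abs_self _
    _ ≤ ‖f‖ * ‖y‖ := f.le_opNorm y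
    _ ≤ ‖f‖ * ‖v‖ := mul_le_mul_of_nonneg_left h1 (norm_nonneg f)

lemma absVal_mono {u v : E} (hu : 0 ≤ u) (h : u ≤ v) : absVal f u ≤ absVal f v :=
  absVal_le f hu (fun y hy => le_absVal f (le_trans hy h))

lemma absVal_zero : absVal f (0:E) = 0 := by
  refine le_antisymm (absVal_le f le_rfl ?_) (absVal_nonneg f le_rfl)
  intro y hy
  have h3 : y ≤ 0 := (le_abs_self y).trans hy
  have h4 : -y ≤ 0 := (neg_le_abs y).trans hy
  have hy0 : y = 0 := le_antisymm h3 (by simpa using h4)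
  simp [hy0]

lemma absVal_neg_fun (v : E) : absVal (-f) v = absVal f v := by
  unfold absVal
  congr 1
  ext r
  constructor
  · rintro ⟨y, hy, rfl⟩
    exact ⟨-y, by simpa using hy, by simp⟩
  · rintro ⟨y, hy, rfl⟩
    exact ⟨-y, by simpa using hy, by simp⟩

lemma exists_absVal_witness {v : E} (hv : 0 ≤ v) {c : ℝ} (h : c < absVal f v) :
    ∃ y, |y| ≤ v ∧ c < f y := by
  obtain ⟨_, ⟨y, hy, rfl⟩, hc⟩ := exists_lt_of_lt_csSup (absVal_set_nonempty f hv) h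
  exact ⟨y, hy, hc⟩

lemma exists_riesz_split {y a b : E} (ha : 0 ≤ a) (hb : 0 ≤ b) (h : |y| ≤ a + b) :
    ∃ y₁ y₂, y = y₁ + y₂ ∧ |y₁| ≤ a ∧ |y₂| ≤ b := by
  set T := (y ⊔ (-a)) ⊓ a with hT
  have hTa : |T| ≤ a := by
    refine abs_le'.2 ⟨inf_le_right, ?_⟩
    have h1 : -a ≤ T := le_inf le_sup_right ((neg_nonpos.2 ha).trans ha)
    simpa using neg_le_neg h1
  have hyT : y - T = (0 ⊓ (y + a)) ⊔ (y - a) := by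
    rw [hT, sub_inf, sub_sup, sub_self, sub_neg_eq_add]
  have hyb : y - a ≤ b :=
    sub_le_iff_le_add'.2 (le_trans (le_abs_self y) h)
  have hyb' : -y - a ≤ b :=
    sub_le_iff_le_add'.2 (le_trans (neg_le_abs y) h)
  have habs : |y - T| ≤ b := by
    refine abs_le'.2 ⟨?_, ?_⟩
    · rw [hyT]
      exact sup_le (le_trans inf_le_left hb) hyb
    · have h1 : 0 ⊓ (y + a) ≤ y - T := hyT ▸ le_sup_left
      have h2 : -(y - T) ≤ -(0 ⊓ (y + a)) := neg_le_neg h1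
      have h3 : -((0:E) ⊓ (y + a)) = 0 ⊔ (-(y+a)) := by rw [neg_inf]; simp
      have h4 : (0:E) ⊔ (-(y+a)) ≤ b := by
        refine sup_le hb ?_
        have h5 : -(y + a) = -y - a := by abel
        rw [h5]; exact hyb'
      calc -(y - T) ≤ -(0 ⊓ (y + a)) := h2
        _ = 0 ⊔ (-(y+a)) := h3
        _ ≤ b := h4
  exact ⟨T, y - T, by abel, hTa, habs⟩

lemma absVal_add {a b : E} (ha : 0 ≤ a) (hb : 0 ≤ b) :
    absVal f (a + b) = absVal f a + absVal f b := by
  refine le_antisymm ?_ ?_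
  · refine absVal_le f (by exact add_nonneg ha hb) ?_
    intro y hy
    obtain ⟨y₁, y₂, rfl, h1, h2⟩ := exists_riesz_split ha hb hy
    have := add_le_add (le_absVal f h1) (le_absVal f h2)
    simpa using this
  · have key : ∀ y₁ : E, |y₁| ≤ a → ∀ y₂ : E, |y₂| ≤ b → f y₁ + f y₂ ≤ absVal f (a + b) := by
      intro y₁ h1 y₂ h2
      have h3 : |y₁ + y₂| ≤ a + b := le_trans (abs_add_le _ _) (add_le_add h1 h2)
      have h4 := le_absVal f h3
      rw [map_add] at h4
      exact h4
    have key2 : ∀ y₁ : E, |y₁| ≤ a → f y₁ + absVal f b ≤ absVal f (a + b) := by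
      intro y₁ h1
      have h5 : absVal f b ≤ absVal f (a+b) - f y₁ :=
        absVal_le f hb (fun y₂ h2 => by have := key y₁ h1 y₂ h2; linarith)
      linarith
    have key3 : absVal f a ≤ absVal f (a+b) - absVal f b :=
      absVal_le f ha (fun y₁ h1 => by have := key2 y₁ h1; linarith)
    linarith

lemma absVal_sub_le {u v : E} (hu : 0 ≤ u) (huv : u ≤ v) :
    absVal f v - absVal f u = absVal f (v - u) := by
  have h0 : (0:E) ≤ v - u := sub_nonneg.2 huv
  have := absVal_add f hu h0
  rw [add_sub_cancel] at this
  linarith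

lemma posVal_subset (v : E) :
    ((fun y => f y) '' {y | 0 ≤ y ∧ y ≤ v}) ⊆ ((fun y => f y) '' {y | |y| ≤ v}) := by
  rintro _ ⟨y, ⟨hy0, hyv⟩, rfl⟩
  exact ⟨y, by rw [Set.mem_setOf_eq, abs_of_nonneg hy0]; exact hyv, rfl⟩

lemma posVal_nonneg {v : E} (hv : 0 ≤ v) : 0 ≤ posVal f v := by
  have h1 : f 0 ∈ ((fun y => f y) '' {y | 0 ≤ y ∧ y ≤ v}) := ⟨0, ⟨le_rfl, hv⟩, rfl⟩
  have h2 := le_csSup (BddAbove.mono (posVal_subset f v) (absVal_set_bddAbove f v)) h1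
  rw [map_zero] at h2; exact h2

lemma posVal_le_absVal {v : E} (hv : 0 ≤ v) : posVal f v ≤ absVal f v :=
  csSup_le_csSup (absVal_set_bddAbove f v) ⟨f 0, ⟨0, ⟨le_rfl, hv⟩, rfl⟩⟩
    (posVal_subset f v)

end AbsVal

section Components
variable {E : Type*} [NormedAddCommGroup E] [Lattice E] [IsOrderedAddMonoid E] [HasSolidNorm E] [NormedSpace ℝ E]

/-- `c` is a component of `x`. -/
def IsComp (x c : E) : Prop := 0 ≤ c ∧ c ≤ x ∧ c ⊓ (x - c) = 0

lemma IsComp.self {x : E} (hx : 0 ≤ x) : IsComp x x :=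
  ⟨hx, le_rfl, by simpa using inf_eq_right.2 hx⟩

lemma IsComp.compl {x c : E} (h : IsComp x c) : IsComp x (x - c) := by
  refine ⟨sub_nonneg.2 h.2.1, sub_le_self _ h.1, ?_⟩
  rw [sub_sub_cancel, inf_comm]
  exact h.2.2

lemma IsComp.inf {x c d : E} (hc : IsComp x c) (hd : IsComp x d) : IsComp x (c ⊓ d) := by
  have h0 : (0:E) ≤ c ⊓ d := le_inf hc.1 hd.1
  refine ⟨h0, le_trans inf_le_left hc.2.1, ?_⟩
  have h1 : x - c ⊓ d = (x - c) ⊔ (x - d) := sub_inf c d x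
  have h2 : (c ⊓ d) ⊓ (x - c ⊓ d) ≤ c ⊓ (x - c) + d ⊓ (x - d) := by
    have h3 : x - c ⊓ d ≤ (x - c) + (x - d) := by
      rw [h1]
      exact sup_le_add_of_nonneg (sub_nonneg.2 hc.2.1) (sub_nonneg.2 hd.2.1)
    calc (c ⊓ d) ⊓ (x - c ⊓ d) ≤ (c ⊓ d) ⊓ ((x - c) + (x - d)) :=
          inf_le_inf_left _ h3
      _ ≤ (c ⊓ d) ⊓ (x - c) + (c ⊓ d) ⊓ (x - d) :=
          inf_add_le' h0 (sub_nonneg.2 hc.2.1) (sub_nonneg.2 hd.2.1)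
      _ ≤ c ⊓ (x - c) + d ⊓ (x - d) :=
          add_le_add (inf_le_inf_right _ inf_le_left) (inf_le_inf_right _ inf_le_right)
  rw [hc.2.2, hd.2.2, add_zero] at h2
  exact le_antisymm h2 (le_inf h0 (sub_nonneg.2 (inf_le_left.trans hc.2.1)))

/-- Key componentification: from a splitting element `s ∈ [0,x]`, produce a component `c`
with `c ≤ s + s` and `x - c ≤ (x-s) + (x-s)`. -/
lemma componentify (hσ : SigmaDedekindComplete E) {x s : E} (hs0 : 0 ≤ s) (hsx : s ≤ x) :
    ∃ c : E, IsComp x c ∧ c ≤ s + s ∧ x - c ≤ (x - s) + (x - s) := by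
  have hx0 : (0:E) ≤ x := hs0.trans hsx
  set g : E := (x - (s + s)) ⊔ 0 with hg
  have hg0 : (0:E) ≤ g := le_sup_right
  have hgx : g ≤ x := sup_le (sub_le_self _ (add_nonneg hs0 hs0)) hx0
  set a : ℕ → E := fun k => (k • g) ⊓ x with ha
  have hax : ∀ k, a k ≤ x := fun k => inf_le_right
  have ha0 : ∀ k, 0 ≤ a k := fun k => le_inf (nsmul_nonneg hg0 k) hx0
  obtain ⟨p, hp⟩ := hσ a ⟨x, hax⟩
  have hpx : p ≤ x := hp.2 (by rintro _ ⟨k, rfl⟩; exact hax k)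
  have hp0 : 0 ≤ p := (ha0 0).trans (hp.1 ⟨0, rfl⟩)
  have hgp : g ≤ p := by
    have h1 : a 1 = g := by
      rw [ha]; simp [inf_eq_left.2 hgx]
    exact h1 ▸ hp.1 ⟨1, rfl⟩
  -- p is disjoint from x - p
  have hdisj_g : (x - p) ⊓ g = 0 := by
    set d := (x - p) ⊓ g with hd
    have hd0 : 0 ≤ d := le_inf (sub_nonneg.2 hpx) hg0
    have key : ∀ k, a k + d ≤ a (k+1) := by
      intro k
      refine le_inf ?_ ?_
      · calc a k + d ≤ (k • g) + g := add_le_add inf_le_left inf_le_right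
          _ = (k+1) • g := (succ_nsmul _ _).symm
      · have h1 : d ≤ x - p := inf_le_left
        have h2 : p ≥ a k := hp.1 ⟨k, rfl⟩
        calc a k + d ≤ a k + (x - p) := add_le_add_right h1 _
          _ ≤ p + (x - p) := add_le_add_left h2 _
          _ = x := by abel
    have h5 : p ≤ p - d := by
      refine hp.2 ?_
      rintro _ ⟨k, rfl⟩
      exact le_sub_iff_add_le.2 ((key k).trans (hp.1 ⟨k+1, rfl⟩))
    have h6 : d ≤ 0 := by have := sub_nonneg.2 h5; simpa using this
    exact le_antisymm h6 hd0
  have hcomp : p ⊓ (x - p) = 0 := by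
    refine isLUB_inf_eq_zero hp (sub_nonneg.2 hpx) ha0 ?_
    intro k
    refine le_antisymm ?_ (le_inf (ha0 k) (sub_nonneg.2 hpx))
    calc a k ⊓ (x - p) ≤ (k • g) ⊓ (x - p) := inf_le_inf_right _ inf_le_left
      _ = (x - p) ⊓ (k • g) := inf_comm _ _
      _ ≤ k • ((x - p) ⊓ g) := inf_nsmul_le (sub_nonneg.2 hpx) hg0 k
      _ = 0 := by rw [hdisj_g]; simp
  -- retention: p ≤ (x - s) + (x - s)
  have hnp : p ⊓ ((s + s - x) ⊔ 0) = 0 := by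
    refine isLUB_inf_eq_zero hp le_sup_right ha0 ?_
    intro k
    have hgnp : g ⊓ ((s + s - x) ⊔ 0) = 0 := by
      have h1 : g = (x - (s+s))⁺ := by rw [hg, posPart_def]
      have h2 : (s + s - x) ⊔ 0 = (x - (s+s))⁻ := by
        rw [negPart_def]; congr 1; abel
      rw [h1, h2]
      exact posPart_inf_negPart_eq_zero _
    refine le_antisymm ?_ (le_inf (ha0 k) le_sup_right)
    calc a k ⊓ ((s + s - x) ⊔ 0) ≤ ((s + s - x) ⊔ 0) ⊓ (k • g) := by
          rw [inf_comm]; exact inf_le_inf_left _ inf_le_left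
      _ ≤ k • (((s + s - x) ⊔ 0) ⊓ g) := inf_nsmul_le le_sup_right hg0 k
      _ = 0 := by rw [inf_comm, hgnp]; simp
  have hretent : p ≤ (x - s) + (x - s) := by
    have h1 : p + ((s + s - x) ⊔ 0) = p ⊔ ((s + s - x) ⊔ 0) :=
      add_eq_sup_of_inf_eq_zero hnp
    have h2 : (s + s - x) ⊔ 0 ≤ x := by
      refine sup_le ?_ hx0
      exact sub_le_iff_le_add.2 (add_le_add hsx hsx)
    have h3 : p + ((s + s - x) ⊔ 0) ≤ x := by
      rw [h1]; exact sup_le hpx h2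
    have h5 : p ≤ x - ((s+s-x) ⊔ 0) := le_sub_iff_add_le.2 h3
    have hps := posPart_sub_negPart (x - (s+s))
    have h8 : (x - (s+s))⁺ - (x - (s+s)) = (x - (s+s))⁻ := by
      rw [sub_eq_iff_eq_add]
      rw [sub_eq_iff_eq_add] at hps
      rw [hps]; abel
    have h7 : (s+s-x) ⊔ 0 = g - (x - (s+s)) := by
      have h9 : g = (x - (s+s))⁺ := by rw [hg, posPart_def]
      rw [h9, h8, negPart_def]
      congr 1; abel
    have h6 : x - ((s+s-x) ⊔ 0) = (x - s) + (x - s) - g := by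
      rw [h7]; abel
    calc p ≤ x - ((s+s-x) ⊔ 0) := h5
      _ = (x - s) + (x - s) - g := h6
      _ ≤ (x - s) + (x - s) := sub_le_self _ hg0
  refine ⟨x - p, ⟨sub_nonneg.2 hpx, sub_le_self _ hp0, ?_⟩, ?_, ?_⟩
  · rw [sub_sub_cancel, inf_comm]
    exact hcomp
  · -- x - p ≤ s + s
    have h1 : x - p ≤ x - g := sub_le_sub_left hgp _
    have h2 : x - g = x ⊓ (s + s) := by
      rw [hg]; exact sub_inf_self_sup_zero x (s+s)
    calc x - p ≤ x - g := h1
      _ = x ⊓ (s+s) := h2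
      _ ≤ s + s := inf_le_right
  · rw [sub_sub_cancel]
    exact hretent

end Components

section Rosenthal

variable {μ : ℕ → Set ℕ → ℝ} {C ε : ℝ}

/-- Finite additivity over a finite union of pairwise disjoint sets. -/
lemma fa_biUnion (hadd : ∀ k A B, A ∩ B = ∅ → μ k (A ∪ B) = μ k A + μ k B)
    {ι : Type*} [DecidableEq ι] (k : ℕ) (B : ι → Set ℕ)
    (h0 : μ k ∅ = 0) :
    ∀ F : Finset ι, (∀ i ∈ F, ∀ j ∈ F, i ≠ j → B i ∩ B j = ∅) →
      μ k (⋃ i ∈ F, B i) = ∑ i ∈ F, μ k (B i) := by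
  intro F
  induction F using Finset.induction_on with
  | empty => intro _; simpa using h0
  | @insert a F ha ih =>
    intro hd
    have hdF : ∀ i ∈ F, ∀ j ∈ F, i ≠ j → B i ∩ B j = ∅ := fun i hi j hj hij =>
      hd i (Finset.mem_insert_of_mem hi) j (Finset.mem_insert_of_mem hj) hij
    have hdisj : B a ∩ (⋃ i ∈ F, B i) = ∅ := by
      rw [Set.eq_empty_iff_forall_notMem]
      rintro x ⟨hxa, hxU⟩
      obtain ⟨i, hi, hxi⟩ := Set.mem_iUnion₂.1 hxU
      have hia : a ≠ i := fun h => ha (h ▸ hi)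
      have hBai := hd a (Finset.mem_insert_self _ _) i (Finset.mem_insert_of_mem hi) hia
      have hmem : x ∈ B a ∩ B i := ⟨hxa, hxi⟩
      rw [hBai] at hmem
      exact hmem
    rw [Finset.set_biUnion_insert, hadd k _ _ hdisj, Finset.sum_insert ha, ih hdF]

/-- Rosenthal's lemma for bounded finitely additive set functions on `2^ℕ`. -/
lemma rosenthal (hadd : ∀ k A B, A ∩ B = ∅ → μ k (A ∪ B) = μ k A + μ k B)
    (hbdd : ∀ k A, |μ k A| ≤ C) (hε : 0 < ε) :
    ∃ ψ : ℕ → ℕ, Function.Injective ψ ∧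
      ∀ a : ℕ, ∀ B ⊆ Set.range ψ \ {ψ a}, |μ (ψ a) B| ≤ ε := by
  classical
  by_contra hcon
  push_neg at hcon
  have h0 : ∀ k, μ k ∅ = 0 := by
    intro k
    have := hadd k ∅ ∅ (by simp)
    simpa using this
  set BAD : (ℕ → ℕ) → Prop := fun φ =>
    ∀ ψ : ℕ → ℕ, Function.Injective ψ → Set.range ψ ⊆ Set.range φ →
      ∃ a, ∃ B ⊆ Set.range ψ \ {ψ a}, ε < |μ (ψ a) B| with hBAD
  have hbadid : BAD id := by
    intro ψ hinj _
    obtain ⟨a, B, hB, hgt⟩ := hcon ψ hinj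
    exact ⟨a, B, hB, hgt⟩
  set P : ℕ → Prop := fun r =>
    ∃ φ : ℕ → ℕ, Function.Injective φ ∧ BAD φ ∧
      ∃ G : ℕ → Fin r → Set ℕ,
        (∀ a t, ε < |μ (φ a) (G a t)|) ∧
        (∀ a t, G a t ∩ Set.range φ = ∅) ∧
        (∀ a, ∀ t t' : Fin r, t ≠ t' → G a t ∩ G a t' = ∅) with hP
  have hP0 : P 0 := by
    refine ⟨id, fun a b h => h, hbadid, fun _ t => Fin.elim0 t, ?_, ?_, ?_⟩
    · intro a t; exact Fin.elim0 t
    · intro a t; exact Fin.elim0 t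
    · intro a t; exact Fin.elim0 t
  have hstep : ∀ r, P r → P (r+1) := by
    intro r hr
    obtain ⟨φ, hφinj, hφbad, G, hG1, hG2, hG3⟩ := hr
    have hsub : ∀ i : ℕ, ∃ a : ℕ, ∃ B ⊆ Set.range (fun j => φ (Nat.pair i j)) \
        {φ (Nat.pair i a)}, ε < |μ (φ (Nat.pair i a)) B| := by
      intro i
      have hinj : Function.Injective (fun j => φ (Nat.pair i j)) := by
        intro a b h
        exact (Nat.pair_eq_pair.1 (hφinj h)).2
      obtain ⟨a, B, hB, hgt⟩ := hφbad _ hinj (by rintro _ ⟨j, rfl⟩; exact ⟨_, rfl⟩)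
      exact ⟨a, B, hB, hgt⟩
    choose a B hB hgt using hsub
    set φ' : ℕ → ℕ := fun i => φ (Nat.pair i (a i)) with hφ'
    have hφ'inj : Function.Injective φ' := by
      intro i i' h
      exact (Nat.pair_eq_pair.1 (hφinj h)).1
    have hranφ' : Set.range φ' ⊆ Set.range φ := by rintro _ ⟨i, rfl⟩; exact ⟨_, rfl⟩
    -- the new family: B i in slot 0, old sets in the other slots
    set G' : ℕ → Fin (r+1) → Set ℕ :=
      fun i => Fin.cons (B i) (fun t => G (Nat.pair i (a i)) t) with hG'
    have hG'0 : ∀ i, G' i 0 = B i := fun i => rfl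
    have hG'succ : ∀ i (t : Fin r), G' i t.succ = G (Nat.pair i (a i)) t := fun i t => rfl
    have hBnotran : ∀ i, B i ∩ Set.range φ' = ∅ := by
      intro i
      rw [Set.eq_empty_iff_forall_notMem]
      rintro x ⟨hx1, i', hx2⟩
      obtain ⟨⟨j, hj⟩, hne⟩ := hB i hx1
      have hj' : φ (Nat.pair i j) = x := hj
      have hx2' : φ (Nat.pair i' (a i')) = x := hx2
      apply hne
      have heq : φ (Nat.pair i j) = φ (Nat.pair i' (a i')) := by rw [hj', hx2']
      have hpair := Nat.pair_eq_pair.1 (hφinj heq)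
      have hii' : i = i' := hpair.1
      subst hii'
      rw [Set.mem_singleton_iff, ← hj', hpair.2]
    have holdnotB : ∀ i (t : Fin r), G (Nat.pair i (a i)) t ∩ B i = ∅ := by
      intro i t
      rw [Set.eq_empty_iff_forall_notMem]
      rintro x ⟨hx1, hx2⟩
      obtain ⟨⟨j, hj⟩, _⟩ := hB i hx2
      have hj' : φ (Nat.pair i j) = x := hj
      have hmem : x ∈ G (Nat.pair i (a i)) t ∩ Set.range φ := ⟨hx1, ⟨_, hj'⟩⟩
      rw [hG2 (Nat.pair i (a i)) t] at hmem
      exact hmem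
    refine ⟨φ', hφ'inj, fun ψ hinj hsub' => hφbad ψ hinj (hsub'.trans hranφ'), G', ?_, ?_, ?_⟩
    · intro i t
      refine Fin.cases ?_ ?_ t
      · rw [hG'0]; exact hgt i
      · intro t'; rw [hG'succ]; exact hG1 (Nat.pair i (a i)) t'
    · intro i t
      refine Fin.cases ?_ ?_ t
      · rw [hG'0]; exact hBnotran i
      · intro t'
        rw [hG'succ]
        rw [Set.eq_empty_iff_forall_notMem]
        rintro x ⟨hx1, hx2⟩
        have hmem : x ∈ G (Nat.pair i (a i)) t' ∩ Set.range φ := ⟨hx1, hranφ' hx2⟩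
        rw [hG2 (Nat.pair i (a i)) t'] at hmem
        exact hmem
    · intro i t t' hne
      refine Fin.cases (motive := fun t => t ≠ t' → G' i t ∩ G' i t' = ∅) ?_ ?_ t hne
      · -- t = 0
        refine Fin.cases (motive := fun t' => (0 : Fin (r+1)) ≠ t' → G' i 0 ∩ G' i t' = ∅)
          ?_ ?_ t'
        · intro h; exact absurd rfl h
        · intro s _
          rw [hG'0, hG'succ, Set.inter_comm]
          exact holdnotB i s
      · intro s
        refine Fin.cases (motive := fun t' => (Fin.succ s) ≠ t' → G' i s.succ ∩ G' i t' = ∅)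
          ?_ ?_ t'
        · intro _
          rw [hG'0, hG'succ]
          exact holdnotB i s
        · intro s' hne'
          rw [hG'succ, hG'succ]
          refine hG3 (Nat.pair i (a i)) s s' ?_
          intro h
          exact hne' (by rw [h])
  have hPall : ∀ r, P r := fun r => Nat.rec hP0 (fun r h => hstep r h) r
  have hCε : ∀ r, P r → (r : ℝ) * ε ≤ 2 * C := by
    intro r hr
    obtain ⟨φ, hφinj, hφbad, G, hG1, hG2, hG3⟩ := hr
    set k := φ 0 with hk
    set Bt : Fin r → Set ℕ := fun t => G 0 t with hBt
    have hdisj : ∀ t t' : Fin r, t ≠ t' → Bt t ∩ Bt t' = ∅ := fun t t' h => hG3 0 t t' h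
    have hgt : ∀ t, ε < |μ k (Bt t)| := fun t => hG1 0 t
    have hsum : ∀ T : Finset (Fin r), μ k (⋃ t ∈ T, Bt t) = ∑ t ∈ T, μ k (Bt t) :=
      fun T => fa_biUnion hadd k Bt (h0 k) T (fun i _ j _ hij => hdisj i j hij)
    set Tp : Finset (Fin r) := Finset.univ.filter (fun t => 0 < μ k (Bt t)) with hTp
    set Tm : Finset (Fin r) := Finset.univ.filter (fun t => ¬ 0 < μ k (Bt t)) with hTm
    have hcardp : (Tp.card : ℝ) * ε ≤ C := by
      have h1 : ∀ t ∈ Tp, ε ≤ μ k (Bt t) := by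
        intro t ht
        have h2 : 0 < μ k (Bt t) := (Finset.mem_filter.1 ht).2
        have h3 := hgt t
        rw [abs_of_pos h2] at h3
        linarith
      have h4 : (Tp.card : ℝ) * ε ≤ ∑ t ∈ Tp, μ k (Bt t) := by
        have := Finset.card_nsmul_le_sum Tp (fun t => μ k (Bt t)) ε h1
        simpa [nsmul_eq_mul] using this
      have h5 : ∑ t ∈ Tp, μ k (Bt t) ≤ C := by
        rw [← hsum Tp]
        exact le_trans (le_abs_self _) (hbdd k _)
      linarith
    have hcardm : (Tm.card : ℝ) * ε ≤ C := by
      have h1 : ∀ t ∈ Tm, μ k (Bt t) ≤ -ε := by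
        intro t ht
        have h2 : ¬ 0 < μ k (Bt t) := (Finset.mem_filter.1 ht).2
        push_neg at h2
        have h3 := hgt t
        rw [abs_of_nonpos h2] at h3
        linarith
      have h4 : ∑ t ∈ Tm, μ k (Bt t) ≤ (Tm.card : ℝ) * (-ε) := by
        have := Finset.sum_le_card_nsmul Tm (fun t => μ k (Bt t)) (-ε) h1
        simpa [nsmul_eq_mul] using this
      have h5 : -C ≤ ∑ t ∈ Tm, μ k (Bt t) := by
        rw [← hsum Tm]
        exact neg_le_of_abs_le (hbdd k _)
      nlinarith [h4, h5]
    have hcards : Tp.card + Tm.card = r := by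
      have := Finset.card_filter_add_card_filter_not
        (s := (Finset.univ : Finset (Fin r))) (p := fun t => 0 < μ k (Bt t))
      simpa [hTp, hTm] using this
    have : ((Tp.card + Tm.card : ℕ) : ℝ) * ε ≤ 2 * C := by
      push_cast
      nlinarith [hcardp, hcardm]
    rw [hcards] at this
    exact this
  obtain ⟨r, hrbig⟩ := exists_nat_gt ((2*C)/ε + 1)
  have h6 := hCε r (hPall r)
  have hC : 0 ≤ C := le_trans (abs_nonneg _) (hbdd 0 ∅)
  have h7 : (r:ℝ) ≤ 2*C/ε := by
    rw [le_div_iff₀ hε]; linarith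
  linarith

end Rosenthal

section OrderSum
variable {E : Type*} [NormedAddCommGroup E] [Lattice E] [IsOrderedAddMonoid E] [HasSolidNorm E] [NormedSpace ℝ E]

lemma isLUB_range_add {a b : ℕ → E} {α β : E} (hma : Monotone a) (hmb : Monotone b)
    (ha : IsLUB (Set.range a) α) (hb : IsLUB (Set.range b) β) :
    IsLUB (Set.range (fun n => a n + b n)) (α + β) := by
  constructor
  · rintro _ ⟨n, rfl⟩
    exact add_le_add (ha.1 ⟨n, rfl⟩) (hb.1 ⟨n, rfl⟩)
  · intro c hc
    have key : ∀ n m, a n + b m ≤ c := by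
      intro n m
      have h1 : a n + b m ≤ a (max n m) + b (max n m) :=
        add_le_add (hma (le_max_left _ _)) (hmb (le_max_right _ _))
      exact h1.trans (hc ⟨max n m, rfl⟩)
    have h2 : ∀ n, a n ≤ c - β := by
      intro n
      have h3 : β ≤ c - a n := by
        refine hb.2 ?_
        rintro _ ⟨m, rfl⟩
        rw [le_sub_iff_add_le, add_comm]
        exact key n m
      have h4 : a n + β ≤ a n + (c - a n) := add_le_add_right h3 _
      rw [le_sub_iff_add_le]
      calc a n + β ≤ a n + (c - a n) := h4
        _ = c := by abel
    have h4 : α ≤ c - β := ha.2 (by rintro _ ⟨n, rfl⟩; exact h2 n)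
    calc α + β ≤ (c - β) + β := add_le_add_left h4 _
      _ = c := by abel

/-- Sum of elements dominated by a pairwise disjoint family below `v` is `≤ v`. -/
lemma sum_dominated_le {v : E} (hv : 0 ≤ v) (b e : ℕ → E) (hb0 : ∀ i, 0 ≤ b i)
    (he0 : ∀ i, 0 ≤ e i) (heb : ∀ i, e i ≤ b i) (hbv : ∀ i, b i ≤ v)
    (hd : ∀ i j, i ≠ j → b i ⊓ b j = 0) :
    ∀ F : Finset ℕ, (∑ i ∈ F, e i) ≤ v ∧ ∀ j ∉ F, (∑ i ∈ F, e i) ⊓ b j = 0 := by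
  classical
  intro F
  induction F using Finset.induction_on with
  | empty =>
    refine ⟨by simpa using hv, ?_⟩
    intro j _
    simpa using inf_eq_left.2 (hb0 j)
  | @insert i F hinot ih =>
    have hsum0 : (0:E) ≤ ∑ m ∈ F, e m := Finset.sum_nonneg (fun m _ => he0 m)
    have hdisji : (∑ m ∈ F, e m) ⊓ e i = 0 := by
      refine le_antisymm ?_ (le_inf hsum0 (he0 i))
      calc (∑ m ∈ F, e m) ⊓ e i ≤ (∑ m ∈ F, e m) ⊓ b i := inf_le_inf_left _ (heb i)
        _ = 0 := ih.2 i hinot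
    have hsumi : ∑ m ∈ insert i F, e m = e i + ∑ m ∈ F, e m := Finset.sum_insert hinot
    constructor
    · rw [hsumi]
      have h1 : e i + ∑ m ∈ F, e m = e i ⊔ ∑ m ∈ F, e m := by
        rw [inf_comm] at hdisji
        exact add_eq_sup_of_inf_eq_zero hdisji
      rw [h1]
      exact sup_le ((heb i).trans (hbv i)) ih.1
    · intro j hj
      have hji : j ≠ i := fun h => hj (h ▸ Finset.mem_insert_self _ _)
      have hjF : j ∉ F := fun h => hj (Finset.mem_insert_of_mem h)
      rw [hsumi]
      refine le_antisymm ?_ (le_inf (add_nonneg (he0 i) hsum0) (hb0 j))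
      calc (e i + ∑ m ∈ F, e m) ⊓ b j
          ≤ (e i + ∑ m ∈ F, e m) ⊓ b j := le_rfl
        _ ≤ e i ⊓ b j + (∑ m ∈ F, e m) ⊓ b j := by
            rw [inf_comm, inf_comm (e i) _, inf_comm (∑ m ∈ F, e m) _]
            exact inf_add_le' (hb0 j) (he0 i) hsum0
        _ ≤ b i ⊓ b j + (∑ m ∈ F, e m) ⊓ b j :=
            add_le_add_left (inf_le_inf_right _ (heb i)) _
        _ = 0 := by rw [hd i j (fun h => hji h.symm), ih.2 j hjF, add_zero]

end OrderSum

section Endgame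
open scoped Classical
variable {E : Type*} [NormedAddCommGroup E] [Lattice E] [IsOrderedAddMonoid E] [HasSolidNorm E] [NormedSpace ℝ E]

/-- Partial sums of `w` over `A`. -/
noncomputable def psum (w : ℕ → E) (A : Set ℕ) (N : ℕ) : E :=
  ∑ i ∈ (Finset.range N).filter (· ∈ A), w i

lemma psum_monotone {w : ℕ → E} (hw : ∀ i, 0 ≤ w i) (A : Set ℕ) :
    Monotone (psum w A) := by
  intro N M hNM
  refine Finset.sum_le_sum_of_subset_of_nonneg ?_ (fun i _ _ => hw i)
  exact Finset.filter_subset_filter _ (Finset.range_subset_range.2 hNM)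

lemma psum_union {w : ℕ → E} {A B : Set ℕ} (hAB : A ∩ B = ∅) (N : ℕ) :
    psum w (A ∪ B) N = psum w A N + psum w B N := by
  unfold psum
  rw [← Finset.sum_union]
  · congr 1
    ext i
    simp only [Finset.mem_filter, Finset.mem_union, Set.mem_union]
    tauto
  · rw [Finset.disjoint_filter]
    intro i _ hiA hiB
    have : i ∈ A ∩ B := ⟨hiA, hiB⟩
    rw [hAB] at this
    exact this

lemma psum_singleton {w : ℕ → E} (hw : ∀ i, 0 ≤ w i) (i : ℕ) :
    IsLUB (Set.range (psum w ({i} : Set ℕ))) (w i) := by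
  have hval : ∀ N, psum w ({i} : Set ℕ) N = if i ∈ Finset.range N then w i else 0 := by
    intro N
    rw [psum, Finset.sum_filter]
    simp only [Set.mem_singleton_iff]
    exact Finset.sum_ite_eq' (Finset.range N) i w
  constructor
  · rintro _ ⟨N, rfl⟩
    rw [hval N]
    split
    · exact le_rfl
    · exact hw i
  · intro c hc
    have h1 := hc ⟨i+1, rfl⟩
    rw [hval (i+1)] at h1
    simpa [Nat.lt_succ_self] using h1

/-- The endgame: disjoint carriers with uniformly big witnesses contradict weak*-nullity. -/
lemma endgame (hσ : SigmaDedekindComplete E) (g : ℕ → E →L[ℝ] ℝ)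
    (hnull : WeakStarNull g) {v : E} (hv : 0 ≤ v)
    {M : ℝ} (hM : ∀ n, ‖g n‖ ≤ M)
    (b : ℕ → E) (hb0 : ∀ i, 0 ≤ b i) (hbv : ∀ i, b i ≤ v)
    (hbd : ∀ i j, i ≠ j → b i ⊓ b j = 0)
    (nn : ℕ → ℕ) (hmono : StrictMono nn) {c₀ : ℝ} (hc : 0 < c₀)
    (hbig : ∀ i, c₀ ≤ absVal (g (nn i)) (b i)) : False := by
  -- witnesses
  have hwit : ∀ i, ∃ y, |y| ≤ b i ∧ c₀ / 2 < g (nn i) y := by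
    intro i
    exact exists_absVal_witness _ (hb0 i) (by linarith [hbig i])
  choose y hyb hygt using hwit
  set yp : ℕ → E := fun i => y i ⊔ 0 with hyp
  set ym : ℕ → E := fun i => (-(y i)) ⊔ 0 with hym
  have hyp0 : ∀ i, 0 ≤ yp i := fun i => le_sup_right
  have hym0 : ∀ i, 0 ≤ ym i := fun i => le_sup_right
  have hypb : ∀ i, yp i ≤ b i := fun i => sup_le ((le_abs_self _).trans (hyb i)) (hb0 i)
  have hymb : ∀ i, ym i ≤ b i := fun i => sup_le ((neg_le_abs _).trans (hyb i)) (hb0 i)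
  -- the order sums
  have hex : ∀ (w : ℕ → E), (∀ i, 0 ≤ w i) → (∀ i, w i ≤ b i) → ∀ A : Set ℕ,
      ∃ S, IsLUB (Set.range (psum w A)) S := by
    intro w hw0 hwb A
    refine hσ _ ⟨v, fun N => ?_⟩
    exact (sum_dominated_le hv b w hb0 hw0 hwb hbv hbd _).1
  choose SP hSP using hex yp hyp0 hypb
  choose SN hSN using hex ym hym0 hymb
  set z : Set ℕ → E := fun A => SP A - SN A with hz
  have hadd' : ∀ (w : ℕ → E), (∀ i, 0 ≤ w i) → ∀ (S : Set ℕ → E),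
      (∀ A, IsLUB (Set.range (psum w A)) (S A)) →
      ∀ A B : Set ℕ, A ∩ B = ∅ → S (A ∪ B) = S A + S B := by
    intro w hw0 S hS A B hAB
    have h1 : IsLUB (Set.range (fun N => psum w A N + psum w B N)) (S A + S B) :=
      isLUB_range_add (psum_monotone hw0 A) (psum_monotone hw0 B) (hS A) (hS B)
    refine (hS (A ∪ B)).unique ?_
    have h2 : psum w (A ∪ B) = fun N => psum w A N + psum w B N := by
      funext N; exact psum_union hAB N
    rw [show Set.range (psum w (A ∪ B)) =
      Set.range (fun N => psum w A N + psum w B N) from congrArg _ h2]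
    exact h1
  have hzadd : ∀ A B : Set ℕ, A ∩ B = ∅ → z (A ∪ B) = z A + z B := by
    intro A B hAB
    rw [hz]
    dsimp only
    rw [hadd' yp hyp0 SP hSP A B hAB, hadd' ym hym0 SN hSN A B hAB]
    abel
  have hzsingle : ∀ i, z ({i} : Set ℕ) = y i := by
    intro i
    have h1 : SP {i} = yp i := (hSP {i}).unique (psum_singleton hyp0 i)
    have h2 : SN {i} = ym i := (hSN {i}).unique (psum_singleton hym0 i)
    rw [hz]
    dsimp only
    rw [h1, h2, hyp, hym]
    dsimp only
    rw [← posPart_def (y i), ← negPart_def (y i)]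
    exact posPart_sub_negPart (y i)
  have hzero : ∀ (w : ℕ → E) (A : Set ℕ), psum w A 0 = 0 := by
    intro w A; simp [psum]
  have hSPle : ∀ A, SP A ≤ v := by
    intro A
    refine (hSP A).2 ?_
    rintro _ ⟨N, rfl⟩
    exact (sum_dominated_le hv b yp hb0 hyp0 hypb hbv hbd _).1
  have hSNle : ∀ A, SN A ≤ v := by
    intro A
    refine (hSN A).2 ?_
    rintro _ ⟨N, rfl⟩
    exact (sum_dominated_le hv b ym hb0 hym0 hymb hbv hbd _).1
  have hSP0 : ∀ A, 0 ≤ SP A := by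
    intro A
    have := (hSP A).1 ⟨0, rfl⟩
    rw [hzero yp A] at this
    exact this
  have hSN0 : ∀ A, 0 ≤ SN A := by
    intro A
    have := (hSN A).1 ⟨0, rfl⟩
    rw [hzero ym A] at this
    exact this
  have hzb : ∀ A, |z A| ≤ v := by
    intro A
    refine abs_le'.2 ⟨?_, ?_⟩
    · rw [hz]; dsimp only
      calc SP A - SN A ≤ SP A := sub_le_self _ (hSN0 A)
        _ ≤ v := hSPle A
    · rw [hz]; dsimp only
      calc -(SP A - SN A) = SN A - SP A := by abel
        _ ≤ SN A := sub_le_self _ (hSP0 A)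
        _ ≤ v := hSNle A
  -- the measures
  set μ : ℕ → Set ℕ → ℝ := fun i A => g (nn i) (z A) with hμ
  have hμadd : ∀ k A B, A ∩ B = ∅ → μ k (A ∪ B) = μ k A + μ k B := by
    intro k A B hAB
    rw [hμ]; dsimp only
    rw [hzadd A B hAB, map_add]
  have hμbdd : ∀ k A, |μ k A| ≤ M * ‖v‖ := by
    intro k A
    rw [hμ]; dsimp only
    calc |g (nn k) (z A)| ≤ absVal (g (nn k)) v := abs_apply_le_absVal _ (hzb A)
      _ ≤ ‖g (nn k)‖ * ‖v‖ := absVal_le_norm _ hv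
      _ ≤ M * ‖v‖ := mul_le_mul_of_nonneg_right (hM _) (norm_nonneg v)
  obtain ⟨ψ, hψinj, hψ⟩ := rosenthal hμadd hμbdd (show (0:ℝ) < c₀/8 by linarith)
  set Z : E := z (Set.range ψ) with hZ
  have hbigZ : ∀ a, 3*c₀/8 ≤ g (nn (ψ a)) Z := by
    intro a
    have hsplit : ({ψ a} : Set ℕ) ∪ (Set.range ψ \ {ψ a}) = Set.range ψ := by
      rw [Set.union_diff_cancel]
      intro x hx
      rw [Set.mem_singleton_iff] at hx
      exact hx ▸ ⟨a, rfl⟩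
    have hdisj2 : ({ψ a} : Set ℕ) ∩ (Set.range ψ \ {ψ a}) = ∅ := by
      rw [Set.eq_empty_iff_forall_notMem]
      rintro x ⟨hx1, _, hx3⟩
      exact hx3 hx1
    have h1 := hμadd (ψ a) {ψ a} (Set.range ψ \ {ψ a}) hdisj2
    rw [hsplit] at h1
    have h2 : μ (ψ a) ({ψ a} : Set ℕ) = g (nn (ψ a)) (y (ψ a)) := by
      rw [hμ]; dsimp only
      rw [hzsingle (ψ a)]
    have h3 : |μ (ψ a) (Set.range ψ \ {ψ a})| ≤ c₀/8 := hψ a _ (subset_refl _)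
    have h4 := hygt (ψ a)
    have h5 : μ (ψ a) (Set.range ψ) = g (nn (ψ a)) Z := rfl
    rw [h5, h2] at h1
    have h6 := abs_le.1 h3
    rw [h1]
    linarith [h6.1]
  -- contradiction with weak* nullity at the fixed element Z
  have hten := hnull Z
  rw [Metric.tendsto_atTop] at hten
  obtain ⟨N, hN⟩ := hten (3*c₀/8) (by linarith)
  have hbig2 : ∃ a, N ≤ nn (ψ a) := by
    by_contra hcon2
    push_neg at hcon2
    have hinj2 : Function.Injective (fun a => (⟨nn (ψ a), hcon2 a⟩ : Fin N)) := by
      intro a b h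
      have := congrArg (fun t : Fin N => (t : ℕ)) h
      exact hψinj (hmono.injective this)
    obtain ⟨a, b, hab, h⟩ := Finite.exists_ne_map_eq_of_infinite
      (fun a => (⟨nn (ψ a), hcon2 a⟩ : Fin N))
    exact hab (hinj2 h)
  obtain ⟨a, ha⟩ := hbig2
  have h7 := hN (nn (ψ a)) ha
  rw [Real.dist_eq, sub_zero] at h7
  have h8 := hbigZ a
  have h9 := le_abs_self (g (nn (ψ a)) Z)
  linarith

end Endgame

section MainLemma
variable {E : Type*} [NormedAddCommGroup E] [Lattice E] [IsOrderedAddMonoid E] [HasSolidNorm E] [NormedSpace ℝ E] [CompleteSpace E]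

lemma absVal_sum (f : E →L[ℝ] ℝ) (u : ℕ → E) (hu : ∀ i, 0 ≤ u i) :
    ∀ F : Finset ℕ, absVal f (∑ i ∈ F, u i) = ∑ i ∈ F, absVal f (u i) := by
  classical
  intro F
  induction F using Finset.induction_on with
  | empty => simpa using absVal_zero f
  | @insert a F ha ih =>
    rw [Finset.sum_insert ha, Finset.sum_insert ha,
      absVal_add f (hu a) (Finset.sum_nonneg (fun i _ => hu i)), ih]

lemma main_contra (hσ : SigmaDedekindComplete E) (g : ℕ → E →L[ℝ] ℝ)
    (hdisj : Pairwise (fun m n => FunDisjoint (g m) (g n)))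
    (hnull : WeakStarNull g) {v : E} (hv : 0 ≤ v) {ε : ℝ} (hε : 0 < ε)
    (hbig : ∀ n, ε ≤ absVal (g n) v) : False := by
  classical
  -- uniform bound on the norms
  obtain ⟨M, hM⟩ : ∃ M, ∀ n, ‖g n‖ ≤ M := by
    refine banach_steinhaus ?_
    intro x
    have h := (hnull x).norm
    rw [norm_zero] at h
    obtain ⟨C, hC⟩ := h.bddAbove_range
    exact ⟨C, fun n => hC ⟨n, rfl⟩⟩
  -- tolerances
  set tol : ℕ → ℕ → ℝ := fun j m => ε * (1/2)^j * (1/2)^m / 32 with htol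
  have htolpos : ∀ j m, 0 < tol j m := by
    intro j m
    rw [htol]
    positivity
  set γ : ℕ → ℝ := fun j => ε * (1/2)^j / 8 with hγ
  have hγpos : ∀ j, 0 < γ j := by
    intro j; rw [hγ]; positivity
  -- the splitting components
  have hC : ∀ j m : ℕ, ∃ c : E, IsComp v c ∧ absVal (g j) (v - c) ≤ tol j m ∧
      (m ≠ j → absVal (g m) c ≤ tol j m) := by
    intro j m
    by_cases hmj : m ≠ j
    · have hFD := hdisj hmj v hv
      have hne : ((fun y => absVal (g m) y + absVal (g j) (v - y)) ''
          {y | 0 ≤ y ∧ y ≤ v}).Nonempty := ⟨_, ⟨0, ⟨le_rfl, hv⟩, rfl⟩⟩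
      have hlt := exists_lt_of_csInf_lt hne
        (show sInf _ < tol j m / 2 by rw [hFD]; exact half_pos (htolpos j m))
      obtain ⟨_, ⟨s, ⟨hs0, hsv⟩, rfl⟩, hlt⟩ := hlt
      obtain ⟨c, hc, hcs, hcv⟩ := componentify hσ hs0 hsv
      have hnn1 : 0 ≤ absVal (g m) s := absVal_nonneg _ hs0
      have hnn2 : 0 ≤ absVal (g j) (v - s) := absVal_nonneg _ (sub_nonneg.2 hsv)
      refine ⟨c, hc, ?_, fun _ => ?_⟩
      · have h1 : absVal (g j) (v - c) ≤ absVal (g j) ((v - s) + (v - s)) :=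
          absVal_mono _ (sub_nonneg.2 hc.2.1) hcv
        rw [absVal_add _ (sub_nonneg.2 hsv) (sub_nonneg.2 hsv)] at h1
        linarith
      · have h1 : absVal (g m) c ≤ absVal (g m) (s + s) := absVal_mono _ hc.1 hcs
        rw [absVal_add _ hs0 hs0] at h1
        linarith
    · refine ⟨v, IsComp.self hv, ?_, fun h => absurd h hmj⟩
      rw [sub_self]
      rw [absVal_zero]
      exact (htolpos j m).le
  choose cc hcc1 hcc2 hcc3 using hC
  -- the chains
  set ch : ℕ → ℕ → E := fun j => Nat.rec (cc j 0) (fun k p => p ⊓ cc j (k+1)) with hch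
  have hch0 : ∀ j, ch j 0 = cc j 0 := fun j => rfl
  have hchS : ∀ j k, ch j (k+1) = ch j k ⊓ cc j (k+1) := fun j k => rfl
  have hchcomp : ∀ j k, IsComp v (ch j k) := by
    intro j k
    induction k with
    | zero => rw [hch0]; exact hcc1 j 0
    | succ k ih => rw [hchS]; exact ih.inf (hcc1 j (k+1))
  have hchanti : ∀ j, Antitone (ch j) := by
    intro j
    refine antitone_nat_of_succ_le ?_
    intro k
    rw [hchS]
    exact inf_le_left
  have hchle : ∀ j k m, m ≤ k → ch j k ≤ cc j m := by
    intro j k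
    induction k with
    | zero =>
      intro m hm
      rw [Nat.le_zero.1 hm, hch0]
    | succ k ih =>
      intro m hm
      rcases eq_or_lt_of_le hm with h | h
      · rw [h, hchS]
        exact inf_le_right
      · exact le_trans (hchanti j (Nat.le_succ k)) (ih m (Nat.lt_succ_iff.1 h))
  -- smallness of old functionals on chains
  have hch3 : ∀ j k m, m ≤ k → m ≠ j → absVal (g m) (ch j k) ≤ tol j m := by
    intro j k m hm hmj
    calc absVal (g m) (ch j k) ≤ absVal (g m) (cc j m) :=
        absVal_mono _ (hchcomp j k).1 (hchle j k m hm)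
      _ ≤ tol j m := hcc3 j m hmj
  -- retention of the chain owner
  have hch2 : ∀ j k, absVal (g j) (v - ch j k) ≤ ∑ m ∈ Finset.range (k+1), tol j m := by
    intro j k
    induction k with
    | zero =>
      rw [hch0]
      simpa using hcc2 j 0
    | succ k ih =>
      have h1 : v - ch j (k+1) ≤ (v - ch j k) + (v - cc j (k+1)) := by
        rw [hchS, sub_inf]
        exact sup_le_add_of_nonneg (sub_nonneg.2 (hchcomp j k).2.1)
          (sub_nonneg.2 (hcc1 j (k+1)).2.1)
      have h2 : absVal (g j) (v - ch j (k+1)) ≤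
          absVal (g j) (v - ch j k) + absVal (g j) (v - cc j (k+1)) := by
        calc absVal (g j) (v - ch j (k+1)) ≤
            absVal (g j) ((v - ch j k) + (v - cc j (k+1))) :=
              absVal_mono _ (sub_nonneg.2 (hchcomp j (k+1)).2.1) h1
          _ = _ := absVal_add _ (sub_nonneg.2 (hchcomp j k).2.1)
              (sub_nonneg.2 (hcc1 j (k+1)).2.1)
      have h3 := hcc2 j (k+1)
      rw [Finset.sum_range_succ]
      linarith
  have hsumtol : ∀ j k, ∑ m ∈ Finset.range (k+1), tol j m ≤ ε * (1/2)^j / 16 := by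
    intro j k
    have h1 : ∑ m ∈ Finset.range (k+1), tol j m
        = (ε * (1/2)^j / 32) * ∑ m ∈ Finset.range (k+1), (1/2:ℝ)^m := by
      rw [Finset.mul_sum]
      refine Finset.sum_congr rfl ?_
      intro m _
      rw [htol]; ring
    have h2 := sum_geometric_two_le (k+1)
    have h3 : (0:ℝ) ≤ ε * (1/2)^j / 32 := by positivity
    rw [h1]
    calc (ε * (1/2)^j / 32) * ∑ m ∈ Finset.range (k+1), (1/2:ℝ)^m
        ≤ (ε * (1/2)^j / 32) * 2 := by
          exact mul_le_mul_of_nonneg_left h2 h3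
      _ = ε * (1/2)^j / 16 := by ring
  have hch2' : ∀ j k, absVal (g j) (v - ch j k) ≤ ε * (1/2)^j / 16 :=
    fun j k => (hch2 j k).trans (hsumtol j k)
  have htol_le_γ : ∀ j m, tol j m ≤ γ j / 4 := by
    intro j m
    rw [htol, hγ]
    have h1 : (1/2:ℝ)^m ≤ 1 := pow_le_one₀ (by norm_num) (by norm_num)
    have h2 : (0:ℝ) ≤ ε * (1/2)^j := by positivity
    nlinarith
  -- the dichotomy
  by_cases hdich : ∃ j, ∀ k, ∃ n, n ≠ j ∧ γ j < absVal (g n) (ch j k)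
  · -- Branch II : escaping witnesses along a single chain
    obtain ⟨j, hj⟩ := hdich
    choose nf hnf1 hnf2 using hj
    have hesc : ∀ k, k < nf k := by
      intro k
      by_contra hcon
      push_neg at hcon
      have h1 := hch3 j k (nf k) hcon (hnf1 k)
      have h2 := htol_le_γ j (nf k)
      have h3 := hnf2 k
      have h4 := hγpos j
      linarith
    set K : ℕ → ℕ := fun i => Nat.rec 0 (fun _ Ki => max Ki (nf Ki) + 1) i with hK
    have hKS : ∀ i, K (i+1) = max (K i) (nf (K i)) + 1 := fun i => rfl
    have hKmono : StrictMono K := by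
      refine strictMono_nat_of_lt_succ ?_
      intro i
      rw [hKS]
      exact Nat.lt_succ_of_le (le_max_left _ _)
    have hKn : ∀ i, nf (K i) < K (i+1) := by
      intro i
      rw [hKS]
      exact Nat.lt_succ_of_le (le_max_right _ _)
    set nn : ℕ → ℕ := fun i => nf (K i) with hnn
    have hnnmono : StrictMono nn := by
      refine strictMono_nat_of_lt_succ ?_
      intro i
      rw [hnn]
      calc nf (K i) < K (i+1) := hKn i
        _ < nf (K (i+1)) := hesc _
    set b : ℕ → E := fun i => ch j (K i) - ch j (K (i+1)) with hb
    have hble : ∀ i, ch j (K (i+1)) ≤ ch j (K i) := fun i =>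
      hchanti j (hKmono (Nat.lt_succ_self i)).le
    have hb0 : ∀ i, 0 ≤ b i := fun i => sub_nonneg.2 (hble i)
    have hbv : ∀ i, b i ≤ v := fun i =>
      le_trans (sub_le_self _ (hchcomp j (K (i+1))).1) (hchcomp j (K i)).2.1
    have hbd0 : ∀ i i', i < i' → b i ⊓ b i' = 0 := by
      intro i i' hii'
      have h1 : b i ≤ v - ch j (K (i+1)) := by
        rw [hb]
        dsimp only
        exact sub_le_sub_right (hchcomp j (K i)).2.1 _
      have h2 : b i' ≤ ch j (K (i+1)) := by
        rw [hb]
        dsimp only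
        refine le_trans (sub_le_self _ (hchcomp j (K (i'+1))).1) ?_
        exact hchanti j (hKmono.monotone (Nat.succ_le_of_lt hii'))
      refine le_antisymm ?_ (le_inf (hb0 i) (hb0 i'))
      calc b i ⊓ b i' ≤ (v - ch j (K (i+1))) ⊓ ch j (K (i+1)) := inf_le_inf h1 h2
        _ = ch j (K (i+1)) ⊓ (v - ch j (K (i+1))) := inf_comm _ _
        _ = 0 := (hchcomp j (K (i+1))).2.2
    have hbd : ∀ i i', i ≠ i' → b i ⊓ b i' = 0 := by
      intro i i' h
      rcases lt_or_gt_of_ne h with h1 | h1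
      · exact hbd0 i i' h1
      · rw [inf_comm]; exact hbd0 i' i h1
    have hmass : ∀ i, ε * (1/2)^j / 16 ≤ absVal (g (nn i)) (b i) := by
      intro i
      have h1 : absVal (g (nn i)) (ch j (K i)) - absVal (g (nn i)) (ch j (K (i+1)))
          = absVal (g (nn i)) (b i) :=
        absVal_sub_le _ (hchcomp j (K (i+1))).1 (hble i)
      have h2 : γ j < absVal (g (nn i)) (ch j (K i)) := hnf2 (K i)
      have h3 : absVal (g (nn i)) (ch j (K (i+1))) ≤ tol j (nn i) :=
        hch3 j (K (i+1)) (nn i) (hKn i).le (hnf1 (K i))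
      have h4 := htol_le_γ j (nn i)
      have h5 : γ j = ε * (1/2)^j / 8 := rfl
      rw [← h1]
      rw [hγ] at h2 h4
      dsimp only at h2 h4
      have hX : (0:ℝ) ≤ ε * (1/2)^j := by positivity
      linarith
    exact endgame hσ g hnull hv hM b hb0 hbv hbd nn hnnmono
      (by positivity : (0:ℝ) < ε * (1/2)^j / 16) hmass
  · -- Branch I : good hulls for every j
    push_neg at hdich
    choose kk hkk using hdich
    set H : ℕ → E := fun j => ch j (kk j) with hH
    have hHcomp : ∀ j, IsComp v (H j) := fun j => hchcomp j (kk j)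
    have hHsmall : ∀ j n, n ≠ j → absVal (g n) (H j) ≤ γ j := fun j n hn => hkk j n hn
    have hHret : ∀ j, absVal (g j) (v - H j) ≤ ε * (1/2)^j / 16 := fun j => hch2' j (kk j)
    -- residuals
    set r : ℕ → E := fun j => Nat.rec v (fun i ri => ri ⊓ (v - H i)) j with hr
    have hr0 : r 0 = v := rfl
    have hrS : ∀ j, r (j+1) = r j ⊓ (v - H j) := fun j => rfl
    have hrcomp : ∀ j, IsComp v (r j) := by
      intro j
      induction j with
      | zero => rw [hr0]; exact IsComp.self hv
      | succ j ih => rw [hrS]; exact ih.inf (hHcomp j).compl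
    have hrle : ∀ i j, i < j → r j ≤ v - H i := by
      intro i j
      induction j with
      | zero => intro h; exact absurd h (Nat.not_lt_zero i)
      | succ j ih =>
        intro h
        rcases Nat.lt_succ_iff_lt_or_eq.1 h with h1 | h1
        · rw [hrS]
          exact inf_le_left.trans (ih h1)
        · rw [h1, hrS]
          exact inf_le_right
    set w : ℕ → E := fun j => H j ⊓ r j with hw
    have hwcomp : ∀ j, IsComp v (w j) := fun j => (hHcomp j).inf (hrcomp j)
    have hwd0 : ∀ i j, i < j → w i ⊓ w j = 0 := by
      intro i j hij
      refine le_antisymm ?_ (le_inf (hwcomp i).1 (hwcomp j).1)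
      have h1 : w i ≤ H i := inf_le_left
      have h2 : w j ≤ v - H i := inf_le_right.trans (hrle i j hij)
      calc w i ⊓ w j ≤ H i ⊓ (v - H i) := inf_le_inf h1 h2
        _ = 0 := (hHcomp i).2.2
    have hwd : ∀ i j, i ≠ j → w i ⊓ w j = 0 := by
      intro i j h
      rcases lt_or_gt_of_ne h with h1 | h1
      · exact hwd0 i j h1
      · rw [inf_comm]; exact hwd0 j i h1
    -- residual bound : v - r j ≤ ∑_{i<j} H i
    have hrres : ∀ j, v - r j ≤ ∑ i ∈ Finset.range j, H i := by
      intro j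
      induction j with
      | zero => rw [hr0]; simp
      | succ j ih =>
        rw [hrS, sub_inf, sub_sub_cancel, Finset.sum_range_succ]
        refine sup_le ?_ ?_
        · refine le_trans ih ?_
          exact le_add_of_nonneg_right (hHcomp j).1
        · exact le_add_of_nonneg_left (Finset.sum_nonneg fun i _ => (hHcomp i).1)
    have hmass : ∀ j, ε/2 ≤ absVal (g j) (w j) := by
      intro j
      have h1 : v - w j ≤ (v - H j) + (v - r j) := by
        rw [hw]
        dsimp only
        rw [sub_inf]
        exact sup_le_add_of_nonneg (sub_nonneg.2 (hHcomp j).2.1)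
          (sub_nonneg.2 (hrcomp j).2.1)
      have h2 : absVal (g j) (v - w j) ≤
          absVal (g j) (v - H j) + absVal (g j) (v - r j) := by
        calc absVal (g j) (v - w j) ≤ absVal (g j) ((v - H j) + (v - r j)) :=
            absVal_mono _ (sub_nonneg.2 (hwcomp j).2.1) h1
          _ = _ := absVal_add _ (sub_nonneg.2 (hHcomp j).2.1)
              (sub_nonneg.2 (hrcomp j).2.1)
      have h3 : absVal (g j) (v - r j) ≤ ∑ i ∈ Finset.range j, absVal (g j) (H i) := by
        calc absVal (g j) (v - r j) ≤ absVal (g j) (∑ i ∈ Finset.range j, H i) :=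
            absVal_mono _ (sub_nonneg.2 (hrcomp j).2.1) (hrres j)
          _ = _ := absVal_sum _ _ (fun i => (hHcomp i).1) _
      have h4 : ∑ i ∈ Finset.range j, absVal (g j) (H i) ≤ ∑ i ∈ Finset.range j, γ i := by
        refine Finset.sum_le_sum ?_
        intro i hi
        have hij : j ≠ i := (Finset.mem_range.1 hi).ne'
        exact hHsmall i j hij
      have h5 : ∑ i ∈ Finset.range j, γ i ≤ ε/4 := by
        have h51 : ∑ i ∈ Finset.range j, γ i = (ε/8) * ∑ i ∈ Finset.range j, (1/2:ℝ)^i := by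
          rw [Finset.mul_sum]
          refine Finset.sum_congr rfl ?_
          intro i _
          rw [hγ]; ring
        have h52 := sum_geometric_two_le j
        have h53 : (0:ℝ) ≤ ε/8 := by positivity
        rw [h51]
        calc (ε/8) * ∑ i ∈ Finset.range j, (1/2:ℝ)^i ≤ (ε/8) * 2 :=
            mul_le_mul_of_nonneg_left h52 h53
          _ = ε/4 := by ring
      have h6 : absVal (g j) v = absVal (g j) (w j) + absVal (g j) (v - w j) := by
        have h61 := absVal_add (g j) (hwcomp j).1 (sub_nonneg.2 (hwcomp j).2.1)
        rw [add_sub_cancel] at h61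
        exact h61
      have h7 : absVal (g j) (v - H j) ≤ ε/16 := by
        have h71 := hHret j
        have h72 : (1/2:ℝ)^j ≤ 1 := pow_le_one₀ (by norm_num) (by norm_num)
        nlinarith
      have h8 := hbig j
      linarith
    exact endgame hσ g hnull hv hM w (fun j => (hwcomp j).1) (fun j => (hwcomp j).2.1)
      hwd id strictMono_id (by linarith : (0:ℝ) < ε/2) hmass

lemma absVal_tendsto (hσ : SigmaDedekindComplete E) (f : ℕ → E →L[ℝ] ℝ)
    (hdisj : Pairwise (fun m n => FunDisjoint (f m) (f n)))
    (hnull : WeakStarNull f) {v : E} (hv : 0 ≤ v) :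
    Tendsto (fun n => absVal (f n) v) atTop (𝓝 0) := by
  by_contra hcon
  rw [Metric.tendsto_atTop] at hcon
  push_neg at hcon
  obtain ⟨ε, hε, hfreq⟩ := hcon
  have hfr : ∃ᶠ n in atTop, ε ≤ absVal (f n) v := by
    rw [Filter.frequently_atTop]
    intro N
    obtain ⟨n, hn1, hn2⟩ := hfreq N
    refine ⟨n, hn1, ?_⟩
    rw [Real.dist_eq, sub_zero, abs_of_nonneg (absVal_nonneg _ hv)] at hn2
    exact hn2
  obtain ⟨φ, hφmono, hφ⟩ := Filter.extraction_of_frequently_atTop hfr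
  refine main_contra hσ (fun k => f (φ k)) ?_ ?_ hv hε hφ
  · intro a b hab
    exact hdisj (fun h => hab (hφmono.injective h))
  · intro x
    exact (hnull x).comp hφmono.tendsto_atTop

end MainLemma

end Stmt1Aux
/-- In a σ-Dedekind complete Banach lattice, for a disjoint weak*-null sequence
`(f n)` in `E*`, the sequences `(|f n|)`, `(f n ⁺)` and `(f n ⁻)` are weak*-null. -/
theorem stmt1 {E : Type*} [NormedAddCommGroup E] [Lattice E] [IsOrderedAddMonoid E] [HasSolidNorm E] [NormedSpace ℝ E] [CompleteSpace E]
    (hσ : SigmaDedekindComplete E) (f : ℕ → E →L[ℝ] ℝ)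
    (hdisj : Pairwise (fun m n => FunDisjoint (f m) (f n)))
    (hnull : WeakStarNull f) :
    (∀ x : E, Tendsto (fun n => absValF (f n) x) atTop (𝓝 0)) ∧
    (∀ x : E, Tendsto (fun n => posValF (f n) x) atTop (𝓝 0)) ∧
    (∀ x : E, Tendsto (fun n => negValF (f n) x) atTop (𝓝 0)) := by
  have key : ∀ v : E, 0 ≤ v → Tendsto (fun n => absVal (f n) v) atTop (𝓝 0) :=
    fun v hv => Stmt1Aux.absVal_tendsto hσ f hdisj hnull hv
  have hxp : ∀ x : E, (0:E) ≤ x ⊔ 0 := fun x => le_sup_right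
  have hsq : ∀ (v : E), 0 ≤ v → Tendsto (fun n => posVal (f n) v) atTop (𝓝 0) := by
    intro v hv
    refine squeeze_zero (fun n => Stmt1Aux.posVal_nonneg (f n) hv)
      (fun n => Stmt1Aux.posVal_le_absVal (f n) hv) (key v hv)
  have hsqneg : ∀ (v : E), 0 ≤ v → Tendsto (fun n => posVal (-(f n)) v) atTop (𝓝 0) := by
    intro v hv
    refine squeeze_zero (fun n => Stmt1Aux.posVal_nonneg (-(f n)) hv)
      (fun n => (Stmt1Aux.posVal_le_absVal (-(f n)) hv).trans
        (le_of_eq (Stmt1Aux.absVal_neg_fun (f n) v))) (key v hv)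
  refine ⟨?_, ?_, ?_⟩
  · intro x
    have h := (key (x ⊔ 0) (hxp x)).sub (key (-x ⊔ 0) (hxp (-x)))
    simpa [absValF] using h
  · intro x
    have h := (hsq (x ⊔ 0) (hxp x)).sub (hsq (-x ⊔ 0) (hxp (-x)))
    simpa [posValF] using h
  · intro x
    have h := (hsqneg (x ⊔ 0) (hxp x)).sub (hsqneg (-x ⊔ 0) (hxp (-x)))
    simpa [negValF, posValF] using h
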